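/- arXiv:2507.13945 — 3 statements merged into one kernel-verified Lean document; each statement's English description precedes it below -/
import Mathlib

section
/- Let α be a type, w : ℕ → α, and i ℓ k : ℕ with 1 ≤ k and k ≤ ℓ, and suppose that for all t < ℓ, w (i + t) = w (i + k + t). Then the length-k factor of w starting at position i + ℓ is a cyclic rotation of the length-k factor starting at position i: List.ofFn (fun t : Fin k => w (i + ℓ + (t : ℕ))) = (List.ofFn (fun t : Fin k => w (i + (t : ℕ)))).rotate (ℓ % k). -/
theorem overlap_implies_cyclic_rotation {α : Type*} (w : ℕ → α) (i ℓ k : ℕ)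
    (hk : 1 ≤ k) (hkl : k ≤ ℓ)
    (h : ∀ t < ℓ, w (i + t) = w (i + k + t)) :
    List.ofFn (fun t : Fin k => w (i + ℓ + (t : ℕ))) =
      (List.ofFn (fun t : Fin k => w (i + (t : ℕ)))).rotate (ℓ % k) := by
  have key : ∀ s, s < ℓ + k → w (i + s) = w (i + s % k) := by
    intro s
    induction s using Nat.strong_induction_on with
    | _ s ih =>
      intro hs
      by_cases hsk : s < k
      · rw [Nat.mod_eq_of_lt hsk]
      · push_neg at hsk
        obtain ⟨t, rfl⟩ := Nat.exists_eq_add_of_le hsk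
        have ht : t < ℓ := by omega
        have := (h t ht).symm
        rw [show i + (k + t) = i + k + t by ring, this,
          ih t (by omega) (by omega), Nat.add_mod_left]
  apply List.ext_get
  · simp [Nat.mod_lt ℓ hk]
  · intro n h1 h2
    simp only [List.get_eq_getElem, List.getElem_ofFn, List.getElem_rotate,
      List.length_ofFn]
    have hn : n < k := by simpa using h1
    have h1' : ℓ + n < ℓ + k := by omega
    have := key (ℓ + n) h1'
    rw [show i + ℓ + n = i + (ℓ + n) by ring, this]
    congr 1
    rw [Nat.add_comm ℓ n]
    conv_lhs => rw [Nat.add_mod]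
    conv_rhs => rw [Nat.add_mod]
    rw [Nat.mod_mod_of_dvd ℓ dvd_rfl]
end

section
/- Let α be a type and model letters as elements of α × Bool with the inverse of a letter (a, b) given by (a, !b). Let l : List (α × Bool) be reduced, i.e., List.Chain' (fun x y => ¬(x.1 = y.1 ∧ y.2 = !x.2)) l. Let ℓ ≥ 1 and i, i' : ℕ satisfy i < i', i' ≤ i + ℓ, and i' + ℓ ≤ l.length. Then it is impossible that the length-ℓ factor of l starting at i' equals the inverse of the length-ℓ factor starting at i, i.e., it cannot hold that for all t < ℓ, the (i' + t)-th letter of l equals the inverse of the (i + ℓ - 1 - t)-th letter of l. -/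
theorem intersecting_auto_reaching_same_direction {α : Type*} (l : List (α × Bool))
    (hred : List.Chain' (fun x y => ¬(x.1 = y.1 ∧ y.2 = !x.2)) l)
    (ℓ i i' : ℕ) (hℓ : 1 ≤ ℓ) (h1 : i < i') (h2 : i' ≤ i + ℓ) (h3 : i' + ℓ ≤ l.length) :
    ¬ (∀ t, (ht : t < ℓ) →
        l[i' + t]'(by omega) =
          ((l[i + ℓ - 1 - t]'(by omega)).1, !(l[i + ℓ - 1 - t]'(by omega)).2)) := by
  intro H
  rw [List.Chain', List.isChain_iff_getElem] at hred
  by_cases hcase : i' = i + ℓ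
  · -- adjacent case: l[i+ℓ] is inverse of l[i+ℓ-1]
    have h0 := H 0 hℓ
    have e1 : i' + 0 = (i + ℓ - 1) + 1 := by omega
    simp only [e1, Nat.add_zero] at h0
    have hr := hred (i + ℓ - 1) (by omega)
    have e2 : i + ℓ - 1 - 0 = i + ℓ - 1 := by omega
    simp only [e2] at h0
    have e3 : i + ℓ - 1 + 1 = i + ℓ - 1 + 1 := rfl
    exact hr ⟨(congrArg Prod.fst h0).symm, congrArg Prod.snd h0⟩
  · set s := i' + (i + ℓ) - 1 with hs
    by_cases hpar : s % 2 = 0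
    · -- even: middle letter equals its own inverse
      set p := s / 2 with hp
      have hb1 : i' ≤ p := by omega
      have hb2 : p ≤ i + ℓ - 1 := by omega
      have ht : p - i' < ℓ := by omega
      have h0 := H (p - i') ht
      have e1 : i' + (p - i') = p := by omega
      have e2 : i + ℓ - 1 - (p - i') = p := by omega
      simp only [e1, e2] at h0
      have := congrArg Prod.snd h0
      simp at this
    · -- odd: two adjacent inverse letters
      set p := s / 2 with hp
      have hb1 : i' ≤ p := by omega
      have hb2 : p + 1 ≤ i + ℓ - 1 := by omega
      have ht : p - i' < ℓ := by omega
      have h0 := H (p - i') ht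
      have e1 : i' + (p - i') = p := by omega
      have e2 : i + ℓ - 1 - (p - i') = p + 1 := by omega
      simp only [e1, e2] at h0
      have hr := hred p (by omega)
      refine hr ⟨?_, ?_⟩
      · rw [h0]
      · rw [h0]
        simp
end

section
/- Let α be a type, m ≥ 1 a natural number, and w : ℤ → α × Bool an m-periodic doubly infinite word, i.e., w (t + m) = w t for all t : ℤ. Let ℓ : ℕ and p, p' : ℤ be such that: (i) (w (p - 1)).2 = true and (w (p + ℓ)).2 = false (the occurrence at p is on top); (ii) (w (p' - 1)).2 = false and (w (p' + ℓ)).2 = true (the occurrence at p' is at the bottom); and (iii) the two occurrences of length ℓ agree as strings, meaning either (same orientation) for all t < ℓ, w (p + t) = w (p' + t), or (opposite orientation) for all t < ℓ, w (p' + t) = ((w (p + ℓ - 1 - t)).1, !(w (p + ℓ - 1 - t)).2). Then ℓ + 2 ≤ m. -/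
theorem band_auto_reaching_length_bound {α : Type*} (m : ℕ) (hm : 1 ≤ m)
    (w : ℤ → α × Bool) (hper : ∀ t : ℤ, w (t + m) = w t)
    (ℓ : ℕ) (p p' : ℤ)
    (htop₁ : (w (p - 1)).2 = true) (htop₂ : (w (p + ℓ)).2 = false)
    (hbot₁ : (w (p' - 1)).2 = false) (hbot₂ : (w (p' + ℓ)).2 = true)
    (heq : (∀ t : ℕ, t < ℓ → w (p + t) = w (p' + t)) ∨
           (∀ t : ℕ, t < ℓ →
             w (p' + t) = ((w (p + ℓ - 1 - t)).1, !(w (p + ℓ - 1 - t)).2))) :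
    ℓ + 2 ≤ m := by
  by_contra h
  push_neg at h
  have hm1 : m ≤ ℓ + 1 := by omega
  rcases eq_or_lt_of_le hm1 with hml | hml
  · -- m = ℓ + 1 : then p + ℓ ≡ p - 1 mod m
    have : w (p + ℓ) = w (p - 1) := by
      have := hper (p - 1)
      have hcast : (m : ℤ) = (ℓ : ℤ) + 1 := by exact_mod_cast congrArg (Nat.cast : ℕ → ℤ) hml
      rw [hcast] at this
      rw [← this]; ring_nf
    rw [this, htop₁] at htop₂
    simp at htop₂
  · -- m ≤ ℓ
    have hmℓ : m ≤ ℓ := by omega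
    set k : ℕ := m - 1 with hk
    have hkℓ : k < ℓ := by omega
    have hkc : (k : ℤ) = (m : ℤ) - 1 := by omega
    have hw1 : w (p + k) = w (p - 1) := by
      have := hper (p - 1)
      rw [← this]; rw [hkc]; ring_nf
    have hw2 : w (p' + k) = w (p' - 1) := by
      have := hper (p' - 1)
      rw [← this]; rw [hkc]; ring_nf
    rcases heq with heq | heq
    · have := heq k hkℓ
      rw [hw1, hw2] at this
      rw [this, hbot₁] at htop₁
      simp at htop₁
    · have hmain := heq k hkℓ
      have hw3 : w (p + ℓ - 1 - k) = w (p + ℓ) := by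
        have := hper (p + ℓ - m)
        have h1 : p + (ℓ : ℤ) - (m : ℤ) + (m : ℤ) = p + ℓ := by ring
        rw [h1] at this
        rw [this]; rw [hkc]; ring_nf
      rw [hw2, hw3] at hmain
      have : (w (p' - 1)).2 = !(w (p + ℓ)).2 := by rw [hmain]
      rw [htop₂, hbot₁] at this
      simp at this
end
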